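/- For every ε > 0 there exists N such that for all n ≥ N, the separation dimension of the fully subdivided complete graph satisfies π(K_n^{1/2}) ≤ (1 + ε) · log log (n − 1). -/

import Mathlib

namespace Stmt9Aux

lemma testBit_false_of_le {x L j : ℕ} (hx : x < 2^L) (hj : L ≤ j) : x.testBit j = false :=
  Nat.testBit_eq_false_of_lt (lt_of_lt_of_le hx (Nat.pow_le_pow_right (by norm_num) hj))

lemma exists_msb {L u v : ℕ} (hu : u < 2^L) (hv : v < 2^L) (huv : u ≠ v) :
    ∃ p, p < L ∧ u.testBit p ≠ v.testBit p ∧ ∀ j, p < j → u.testBit j = v.testBit j := by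
  classical
  have hne : ∃ j, u.testBit j ≠ v.testBit j := by
    by_contra h
    push_neg at h
    exact huv (Nat.eq_of_testBit_eq fun i => h i)
  obtain ⟨j, hj⟩ := hne
  have hjL : j < L := by
    by_contra hL
    push_neg at hL
    rw [testBit_false_of_le hu hL, testBit_false_of_le hv hL] at hj
    exact hj rfl
  set s := (Finset.range L).filter (fun i => u.testBit i ≠ v.testBit i) with hs
  have hmem : j ∈ s := by simp [hs, hjL, hj]
  have hsne : s.Nonempty := ⟨j, hmem⟩
  have hmax := s.max'_mem hsne
  simp only [hs, Finset.mem_filter, Finset.mem_range] at hmax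
  refine ⟨s.max' hsne, hmax.1, hmax.2, ?_⟩
  intro j' hj'
  by_cases hj'L : j' < L
  · by_contra hne'
    have hmem' : j' ∈ s := by simp [hs, hj'L, hne']
    exact absurd (s.le_max' _ hmem') (by omega)
  · push_neg at hj'L; rw [testBit_false_of_le hu hj'L, testBit_false_of_le hv hj'L]

lemma xor_lt_xor {u v m p : ℕ} (hne : u.testBit p ≠ v.testBit p)
    (hhigh : ∀ j, p < j → u.testBit j = v.testBit j)
    (hm : m.testBit p = u.testBit p) : u ^^^ m < v ^^^ m := by
  apply Nat.lt_of_testBit p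
  · rw [Nat.testBit_xor, hm]; cases u.testBit p <;> rfl
  · rw [Nat.testBit_xor, hm]
    revert hne; cases u.testBit p <;> cases v.testBit p <;> simp
  · intro j hj; rw [Nat.testBit_xor, Nat.testBit_xor, hhigh j hj]

/-- build a mask with prescribed bits below `L` -/
def maskOf (f : ℕ → Bool) : ℕ → ℕ
  | 0 => 0
  | (L+1) => maskOf f L ^^^ (if f L then 2^L else 0)

lemma maskOf_lt (f : ℕ → Bool) (L : ℕ) : maskOf f L < 2^L := by
  induction L with
  | zero => simp [maskOf]
  | succ L ih =>
    have h1 : maskOf f L < 2^(L+1) := lt_trans ih (by exact Nat.pow_lt_pow_succ (by norm_num))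
    have h2 : (if f L then 2^L else 0) < 2^(L+1) := by
      split <;> [exact Nat.pow_lt_pow_succ (by norm_num); positivity]
    exact Nat.xor_lt_two_pow h1 h2

lemma testBit_maskOf (f : ℕ → Bool) (L p : ℕ) (hp : p < L) : (maskOf f L).testBit p = f p := by
  induction L with
  | zero => omega
  | succ L ih =>
    rw [maskOf, Nat.testBit_xor]
    rcases Nat.lt_or_ge p L with h | h
    · rw [ih h]
      have : (if f L then 2^L else 0).testBit p = false := by
        split
        · exact Nat.testBit_two_pow_of_ne (by omega)
        · simp
      simp [this]
    · have hpL : p = L := by omega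
      subst hpL
      have h0 : (maskOf f p).testBit p = false := Nat.testBit_eq_false_of_lt (maskOf_lt f p)
      rw [h0]
      split <;> simp_all [Nat.testBit_two_pow_self]

/-- Existence of a 2-independent family of masks. -/
lemma exists_twoIndep (t L : ℕ) (hL : L ≤ Nat.centralBinom t) :
    ∃ M : Fin (2*t+2) → ℕ, (∀ i, M i < 2^L) ∧
      ∀ p q, p < L → q < L → p ≠ q → ∀ b₁ b₂ : Bool,
        ∃ i, (M i).testBit p = b₁ ∧ (M i).testBit q = b₂ := by
  classical
  have hcard : Fintype.card (Fin L) ≤ Fintype.card { s : Finset (Fin (2*t)) // s.card = t } := by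
    rw [Fintype.card_finset_len, Fintype.card_fin, Fintype.card_fin]
    simpa [Nat.centralBinom] using hL
  obtain ⟨c⟩ := Function.Embedding.nonempty_of_card_le hcard
  -- row membership function : row i, column p
  set g : Fin (2*t+2) → ℕ → Bool := fun i p =>
    if hp : p < L then
      if hi : (i : ℕ) < 2*t then decide ((⟨(i : ℕ), hi⟩ : Fin (2*t)) ∈ (c ⟨p, hp⟩).val)
      else decide ((i : ℕ) = 2*t)
    else false with hg
  refine ⟨fun i => maskOf (g i) L, fun i => maskOf_lt _ _, ?_⟩
  intro p q hp hq hpq b₁ b₂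
  have key : ∃ i : Fin (2*t+2), g i p = b₁ ∧ g i q = b₂ := by
    have hSne : (c ⟨p, hp⟩).val ≠ (c ⟨q, hq⟩).val := by
      intro h
      have := c.injective (Subtype.ext h)
      exact hpq (congrArg Fin.val this)
    have hdiff : ∀ (S T : {s : Finset (Fin (2*t)) // s.card = t}), S.val ≠ T.val →
        ∃ x : Fin (2*t), x ∈ S.val ∧ x ∉ T.val := by
      intro S T hST
      by_contra h
      push_neg at h
      have hsub : S.val ⊆ T.val := fun x hx => h x hx
      exact hST (Finset.eq_of_subset_of_card_le hsub (by rw [S.2, T.2]))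
    match b₁, b₂ with
    | true, true =>
        refine ⟨⟨2*t, by omega⟩, ?_, ?_⟩ <;> simp [hg, hp, hq]
    | false, false =>
        refine ⟨⟨2*t+1, by omega⟩, ?_, ?_⟩ <;> simp [hg, hp, hq]
    | true, false =>
        obtain ⟨x, hx1, hx2⟩ := hdiff _ _ hSne
        refine ⟨⟨(x : ℕ), by omega⟩, ?_, ?_⟩ <;>
          simp [hg, hp, hq, x.isLt, Fin.eta, hx1, hx2]
    | false, true =>
        obtain ⟨x, hx1, hx2⟩ := hdiff _ _ (Ne.symm hSne)
        refine ⟨⟨(x : ℕ), by omega⟩, ?_, ?_⟩ <;>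
          simp [hg, hp, hq, x.isLt, Fin.eta, hx1, hx2]
  obtain ⟨i, h1, h2⟩ := key
  exact ⟨i, by rw [testBit_maskOf _ _ _ hp, h1], by rw [testBit_maskOf _ _ _ hq, h2]⟩

end Stmt9Aux




/-- Pairwise suitable family of linear orders (injective rank functions). -/
def SepFamily {V : Type*} (G : SimpleGraph V) {m : ℕ} (F : Fin m → V → ℕ) : Prop :=
  (∀ i, Function.Injective (F i)) ∧
  ∀ a b c d : V, G.Adj a b → G.Adj c d → a ≠ c → a ≠ d → b ≠ c → b ≠ d →
    ∃ i, (F i a < F i c ∧ F i a < F i d ∧ F i b < F i c ∧ F i b < F i d) ∨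
         (F i c < F i a ∧ F i d < F i a ∧ F i c < F i b ∧ F i d < F i b)

/-- The separation dimension of `G`. -/
noncomputable def sepDim {V : Type*} (G : SimpleGraph V) : ℕ :=
  sInf {m : ℕ | ∃ F : Fin m → V → ℕ, SepFamily G F}

/-- Index type for the subdivision vertices of `K_p^{1/2}` (equivalently, the open
intervals `(a,b)` with `a < b` in `[p]`). -/
abbrev KIdx (p : ℕ) := {q : Fin p × Fin p // q.1 < q.2}

/-- The fully subdivided complete graph `K_p^{1/2}`: original vertices `Fin p`, and
for each pair `i < j` a subdivision vertex adjacent exactly to `i` and `j`. -/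
def Ksub (p : ℕ) : SimpleGraph (Fin p ⊕ KIdx p) :=
  SimpleGraph.fromRel fun x y => ∃ (i : Fin p) (e : KIdx p),
    x = Sum.inl i ∧ y = Sum.inr e ∧ (i = e.val.1 ∨ i = e.val.2)


namespace Stmt9Aux

/-- key function for one order -/
def keyF (L m : ℕ) {n : ℕ} : (Fin n ⊕ KIdx n) → ℕ :=
  Sum.elim (fun x => (2^L+2) * ((x : ℕ) ^^^ m))
    (fun e => (2^L+2) * min (((e.1.1 : ℕ)) ^^^ m) (((e.1.2 : ℕ)) ^^^ m)
        + (1 + max (((e.1.1 : ℕ)) ^^^ m) (((e.1.2 : ℕ)) ^^^ m)))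

lemma xor_inj {a b m : ℕ} (h : a ^^^ m = b ^^^ m) : a = b := by
  have := congrArg (· ^^^ m) h
  simpa [Nat.xor_assoc] using this

lemma key_ne {B a b v : ℕ} (h1 : 1 + b < B) : B * v ≠ B * a + (1 + b) := by
  intro h
  have h2 := congrArg (· % B) h
  simp only [Nat.mul_mod_right, Nat.mul_add_mod] at h2
  rw [Nat.mod_eq_of_lt h1] at h2
  omega

lemma key_eq {B a b c d : ℕ} (h1 : 1 + b < B) (h2 : 1 + d < B)
    (h : B * a + (1 + b) = B * c + (1 + d)) : a = c ∧ b = d := by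
  have h3 := congrArg (· % B) h
  simp only [Nat.mul_add_mod] at h3
  rw [Nat.mod_eq_of_lt h1, Nat.mod_eq_of_lt h2] at h3
  have h4 : B * a = B * c := by omega
  have hB : 0 < B := by omega
  exact ⟨Nat.eq_of_mul_eq_mul_left hB h4, by omega⟩

lemma minmax_cases {a b c d : ℕ} (h1 : min a b = min c d) (h2 : max a b = max c d) :
    (a = c ∧ b = d) ∨ (a = d ∧ b = c) := by
  rw [Nat.min_def, Nat.min_def] at h1
  rw [Nat.max_def, Nat.max_def] at h2
  split_ifs at h1 h2 <;> omega

lemma keyF_injective {n L : ℕ} (hn : n ≤ 2^L) {m : ℕ} (hm : m < 2^L) :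
    Function.Injective (keyF L m (n := n)) := by
  have hvlt : ∀ x : Fin n, (x : ℕ) ^^^ m < 2^L := fun x =>
    Nat.xor_lt_two_pow (lt_of_lt_of_le x.isLt hn) hm
  have hvinj : ∀ x y : Fin n, (x : ℕ) ^^^ m = (y : ℕ) ^^^ m → x = y := fun x y h =>
    Fin.ext (xor_inj h)
  have hB : ∀ x : Fin n, 1 + ((x : ℕ) ^^^ m) < 2^L + 2 := fun x => by
    have := hvlt x; omega
  intro a b h
  match a, b with
  | Sum.inl x, Sum.inl y =>
    simp only [keyF, Sum.elim_inl] at h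
    have := Nat.eq_of_mul_eq_mul_left (show 0 < 2^L+2 by positivity) h
    rw [hvinj x y this]
  | Sum.inl x, Sum.inr e =>
    simp only [keyF, Sum.elim_inl, Sum.elim_inr] at h
    exact absurd h (key_ne (by have h1 : max ((e.1.1 : ℕ) ^^^ m) ((e.1.2 : ℕ) ^^^ m) < 2^L := max_lt (hvlt _) (hvlt _); omega))
  | Sum.inr e, Sum.inl x =>
    simp only [keyF, Sum.elim_inl, Sum.elim_inr] at h
    exact absurd h.symm (key_ne (by have h1 : max ((e.1.1 : ℕ) ^^^ m) ((e.1.2 : ℕ) ^^^ m) < 2^L := max_lt (hvlt _) (hvlt _); omega))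
  | Sum.inr e, Sum.inr f =>
    simp only [keyF, Sum.elim_inr] at h
    have hbe : 1 + max ((e.1.1 : ℕ) ^^^ m) ((e.1.2 : ℕ) ^^^ m) < 2^L + 2 := by
      have h1 : max ((e.1.1 : ℕ) ^^^ m) ((e.1.2 : ℕ) ^^^ m) < 2^L := max_lt (hvlt _) (hvlt _)
      omega
    have hbf : 1 + max ((f.1.1 : ℕ) ^^^ m) ((f.1.2 : ℕ) ^^^ m) < 2^L + 2 := by
      have h1 : max ((f.1.1 : ℕ) ^^^ m) ((f.1.2 : ℕ) ^^^ m) < 2^L := max_lt (hvlt _) (hvlt _)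
      omega
    obtain ⟨hmin, hmax⟩ := key_eq hbe hbf h
    rcases minmax_cases hmin hmax with ⟨h1, h2⟩ | ⟨h1, h2⟩
    · have e1 : e.1.1 = f.1.1 := hvinj _ _ h1
      have e2 : e.1.2 = f.1.2 := hvinj _ _ h2
      exact congrArg Sum.inr (Subtype.ext (Prod.ext e1 e2))
    · have e1 : e.1.1 = f.1.2 := hvinj _ _ h1
      have e2 : e.1.2 = f.1.1 := hvinj _ _ h2
      have he := e.2
      have hf := f.2
      rw [e1, e2] at he
      exact absurd hf (by simp only [Fin.lt_def] at he ⊢; omega)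

lemma ksub_adj {n : ℕ} {a b : Fin n ⊕ KIdx n} (h : (Ksub n).Adj a b) :
    ∃ (x : Fin n) (e : KIdx n), (x = e.1.1 ∨ x = e.1.2) ∧
      ((a = Sum.inl x ∧ b = Sum.inr e) ∨ (a = Sum.inr e ∧ b = Sum.inl x)) := by
  rw [Ksub, SimpleGraph.fromRel_adj] at h
  obtain ⟨-, h | h⟩ := h
  · obtain ⟨x, e, h1, h2, h3⟩ := h; exact ⟨x, e, h3, Or.inl ⟨h1, h2⟩⟩
  · obtain ⟨x, e, h1, h2, h3⟩ := h; exact ⟨x, e, h3, Or.inr ⟨h2, h1⟩⟩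

lemma arith_first {B vx vx' vy vy' : ℕ} (hx' : 1 + vx' < B)
    (h1 : vx < vx') (h2 : vx < vy) (h3 : vx < vy') :
    B * vx < B * vy ∧ B * vx < B * min vy vy' + (1 + max vy vy') ∧
    B * vx + (1 + vx') < B * vy ∧ B * vx + (1 + vx') < B * min vy vy' + (1 + max vy vy') := by
  have hB : 0 < B := by omega
  have hmin : vx + 1 ≤ min vy vy' := by omega
  have key : B * vx + (1 + vx') < B * (vx + 1) := by
    rw [Nat.mul_add, Nat.mul_one]; omega
  have k2 : B * (vx + 1) ≤ B * min vy vy' := Nat.mul_le_mul_left _ hmin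
  have k3 : B * (vx + 1) ≤ B * vy := Nat.mul_le_mul_left _ (by omega)
  refine ⟨?_, ?_, ?_, ?_⟩
  · exact (Nat.mul_lt_mul_left hB).mpr h2
  · have : B * vx < B * min vy vy' := (Nat.mul_lt_mul_left hB).mpr (by omega)
    omega
  · omega
  · omega

lemma arith_block {B vx vx' vy vy' : ℕ} (hx : 1 + max vx vx' < B)
    (hne : vx ≠ vx') (h : max vx vx' < min vy vy') :
    B * vx < B * vy ∧ B * vx < B * min vy vy' + (1 + max vy vy') ∧
    B * min vx vx' + (1 + max vx vx') < B * vy ∧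
    B * min vx vx' + (1 + max vx vx') < B * min vy vy' + (1 + max vy vy') := by
  have hB : 0 < B := by omega
  have h1 : B * vx ≤ B * max vx vx' := Nat.mul_le_mul_left _ (by omega)
  have h2 : B * max vx vx' < B * min vy vy' := (Nat.mul_lt_mul_left hB).mpr h
  have h3 : B * min vy vy' ≤ B * vy := Nat.mul_le_mul_left _ (by omega)
  have h4 : B * min vx vx' + (1 + max vx vx') < B * (min vx vx' + 1) := by
    rw [Nat.mul_add, Nat.mul_one]; omega
  have h5 : B * (min vx vx' + 1) ≤ B * max vx vx' := Nat.mul_le_mul_left _ (by omega)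
  exact ⟨by omega, by omega, by omega, by omega⟩

end Stmt9Aux

namespace Stmt9Aux

lemma kidx_eq {n : ℕ} (e f : KIdx n) (x x' y y' : Fin n)
    (he : (x = e.1.1 ∧ x' = e.1.2) ∨ (x = e.1.2 ∧ x' = e.1.1))
    (hf : (y = f.1.1 ∧ y' = f.1.2) ∨ (y = f.1.2 ∧ y' = f.1.1))
    (h1 : x = y') (h2 : x' = y) : e = f := by
  have hel : (e.1.1 : ℕ) < (e.1.2 : ℕ) := e.2
  have hfl : (f.1.1 : ℕ) < (f.1.2 : ℕ) := f.2
  have goal : (e.1.1 : ℕ) = (f.1.1 : ℕ) ∧ (e.1.2 : ℕ) = (f.1.2 : ℕ) := by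
    rcases he with ⟨hea, heb⟩ | ⟨hea, heb⟩ <;> rcases hf with ⟨hfa, hfb⟩ | ⟨hfa, hfb⟩ <;>
      subst hea <;> subst heb <;> subst hfa <;> subst hfb <;>
      · have c1 := congrArg Fin.val h1
        have c2 := congrArg Fin.val h2
        omega
  exact Subtype.ext (Prod.ext (Fin.ext goal.1) (Fin.ext goal.2))

lemma concl_first {n L : ℕ} (m : ℕ) (x x' y y' : Fin n) (e f : KIdx n)
    (hkeyE : keyF L m (Sum.inr e) =
      (2^L+2) * min ((x:ℕ)^^^m) ((x':ℕ)^^^m) + (1 + max ((x:ℕ)^^^m) ((x':ℕ)^^^m)))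
    (hkeyF : keyF L m (Sum.inr f) =
      (2^L+2) * min ((y:ℕ)^^^m) ((y':ℕ)^^^m) + (1 + max ((y:ℕ)^^^m) ((y':ℕ)^^^m)))
    (hx'B : 1 + ((x':ℕ)^^^m) < 2^L+2)
    (u1 : (x:ℕ)^^^m < (x':ℕ)^^^m) (u2 : (x:ℕ)^^^m < (y:ℕ)^^^m)
    (u3 : (x:ℕ)^^^m < (y':ℕ)^^^m) :
    keyF L m (Sum.inl x) < keyF L m (Sum.inl y) ∧
    keyF L m (Sum.inl x) < keyF L m (Sum.inr f) ∧
    keyF L m (Sum.inr e) < keyF L m (Sum.inl y) ∧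
    keyF L m (Sum.inr e) < keyF L m (Sum.inr f) := by
  obtain ⟨g1, g2, g3, g4⟩ := arith_first (B := 2^L+2) hx'B u1 u2 u3
  have hmin : min ((x:ℕ)^^^m) ((x':ℕ)^^^m) = (x:ℕ)^^^m := min_eq_left u1.le
  have hmax : max ((x:ℕ)^^^m) ((x':ℕ)^^^m) = (x':ℕ)^^^m := max_eq_right u1.le
  refine ⟨?_, ?_, ?_, ?_⟩
  · simpa [keyF] using g1
  · rw [hkeyF]; simpa [keyF] using g2
  · rw [hkeyE, hmin, hmax]; simpa [keyF] using g3
  · rw [hkeyE, hkeyF, hmin, hmax]; exact g4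

lemma concl_block {n L : ℕ} (m : ℕ) (x x' y y' : Fin n) (e f : KIdx n)
    (hkeyE : keyF L m (Sum.inr e) =
      (2^L+2) * min ((x:ℕ)^^^m) ((x':ℕ)^^^m) + (1 + max ((x:ℕ)^^^m) ((x':ℕ)^^^m)))
    (hkeyF : keyF L m (Sum.inr f) =
      (2^L+2) * min ((y:ℕ)^^^m) ((y':ℕ)^^^m) + (1 + max ((y:ℕ)^^^m) ((y':ℕ)^^^m)))
    (hxB : 1 + max ((x:ℕ)^^^m) ((x':ℕ)^^^m) < 2^L+2)
    (hne : (x:ℕ)^^^m ≠ (x':ℕ)^^^m)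
    (u1 : (x:ℕ)^^^m < (y:ℕ)^^^m) (u2 : (x:ℕ)^^^m < (y':ℕ)^^^m)
    (u3 : (x':ℕ)^^^m < (y:ℕ)^^^m) (u4 : (x':ℕ)^^^m < (y':ℕ)^^^m) :
    keyF L m (Sum.inl x) < keyF L m (Sum.inl y) ∧
    keyF L m (Sum.inl x) < keyF L m (Sum.inr f) ∧
    keyF L m (Sum.inr e) < keyF L m (Sum.inl y) ∧
    keyF L m (Sum.inr e) < keyF L m (Sum.inr f) := by
  have h : max ((x:ℕ)^^^m) ((x':ℕ)^^^m) < min ((y:ℕ)^^^m) ((y':ℕ)^^^m) :=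
    max_lt (lt_min u1 u2) (lt_min u3 u4)
  obtain ⟨g1, g2, g3, g4⟩ := arith_block (B := 2^L+2) hxB hne h
  refine ⟨?_, ?_, ?_, ?_⟩
  · simpa [keyF] using g1
  · rw [hkeyF]; simpa [keyF] using g2
  · rw [hkeyE]; simpa [keyF] using g3
  · rw [hkeyE, hkeyF]; exact g4

end Stmt9Aux

namespace Stmt9Aux

lemma keyF_sep {n L : ℕ} (hn : n ≤ 2^L) (hL2 : 2 ≤ L) {k : ℕ} (M : Fin k → ℕ)
    (hMlt : ∀ i, M i < 2^L)
    (hind : ∀ p q, p < L → q < L → p ≠ q → ∀ b₁ b₂ : Bool,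
       ∃ i, (M i).testBit p = b₁ ∧ (M i).testBit q = b₂)
    (x y : Fin n) (e f : KIdx n)
    (hxe : x = e.1.1 ∨ x = e.1.2) (hyf : y = f.1.1 ∨ y = f.1.2)
    (hxy : x ≠ y) (hef : e ≠ f) :
    ∃ i, (keyF L (M i) (Sum.inl x) < keyF L (M i) (Sum.inl y) ∧
          keyF L (M i) (Sum.inl x) < keyF L (M i) (Sum.inr f) ∧
          keyF L (M i) (Sum.inr e) < keyF L (M i) (Sum.inl y) ∧
          keyF L (M i) (Sum.inr e) < keyF L (M i) (Sum.inr f)) ∨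
         (keyF L (M i) (Sum.inl y) < keyF L (M i) (Sum.inl x) ∧
          keyF L (M i) (Sum.inr f) < keyF L (M i) (Sum.inl x) ∧
          keyF L (M i) (Sum.inl y) < keyF L (M i) (Sum.inr e) ∧
          keyF L (M i) (Sum.inr f) < keyF L (M i) (Sum.inr e)) := by
  have bool3 : ∀ a b c : Bool, a ≠ b → c ≠ b → a = c := by decide
  obtain ⟨x', he, hxx'⟩ : ∃ x',
      ((x = e.1.1 ∧ x' = e.1.2) ∨ (x = e.1.2 ∧ x' = e.1.1)) ∧ x ≠ x' := by
    rcases hxe with h | h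
    · exact ⟨e.1.2, Or.inl ⟨h, rfl⟩, by rw [h]; exact ne_of_lt e.2⟩
    · exact ⟨e.1.1, Or.inr ⟨h, rfl⟩, by rw [h]; exact (ne_of_lt e.2).symm⟩
  obtain ⟨y', hf', hyy'⟩ : ∃ y',
      ((y = f.1.1 ∧ y' = f.1.2) ∨ (y = f.1.2 ∧ y' = f.1.1)) ∧ y ≠ y' := by
    rcases hyf with h | h
    · exact ⟨f.1.2, Or.inl ⟨h, rfl⟩, by rw [h]; exact ne_of_lt f.2⟩
    · exact ⟨f.1.1, Or.inr ⟨h, rfl⟩, by rw [h]; exact (ne_of_lt f.2).symm⟩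
  have hkeyE : ∀ m, keyF L m (Sum.inr e) =
      (2^L+2) * min ((x:ℕ)^^^m) ((x':ℕ)^^^m) + (1 + max ((x:ℕ)^^^m) ((x':ℕ)^^^m)) := by
    intro m
    rcases he with ⟨h1, h2⟩ | ⟨h1, h2⟩
    · rw [keyF]; simp only [Sum.elim_inr]; rw [← h1, ← h2]
    · rw [keyF]; simp only [Sum.elim_inr]; rw [← h1, ← h2, Nat.min_comm, Nat.max_comm]
  have hkeyF : ∀ m, keyF L m (Sum.inr f) =
      (2^L+2) * min ((y:ℕ)^^^m) ((y':ℕ)^^^m) + (1 + max ((y:ℕ)^^^m) ((y':ℕ)^^^m)) := by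
    intro m
    rcases hf' with ⟨h1, h2⟩ | ⟨h1, h2⟩
    · rw [keyF]; simp only [Sum.elim_inr]; rw [← h1, ← h2]
    · rw [keyF]; simp only [Sum.elim_inr]; rw [← h1, ← h2, Nat.min_comm, Nat.max_comm]
  have hlt : ∀ z : Fin n, (z:ℕ) < 2^L := fun z => lt_of_lt_of_le z.isLt hn
  have hvlt : ∀ (i : Fin k) (z : Fin n), (z:ℕ)^^^(M i) < 2^L := fun i z =>
    Nat.xor_lt_two_pow (hlt z) (hMlt i)
  have h1B : ∀ (i : Fin k) (z : Fin n), 1 + ((z:ℕ)^^^(M i)) < 2^L+2 := fun i z => by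
    have := hvlt i z; omega
  have hmaxB : ∀ (i : Fin k) (z w : Fin n),
      1 + max ((z:ℕ)^^^(M i)) ((w:ℕ)^^^(M i)) < 2^L+2 := fun i z w => by
    have h1 : max ((z:ℕ)^^^(M i)) ((w:ℕ)^^^(M i)) < 2^L := max_lt (hvlt i z) (hvlt i w)
    omega
  have hVne : ∀ (i : Fin k) (z w : Fin n), z ≠ w → (z:ℕ)^^^(M i) ≠ (w:ℕ)^^^(M i) :=
    fun i z w hzw h => hzw (Fin.ext (xor_inj h))
  have hne' : ∀ (z w : Fin n), z ≠ w → (z:ℕ) ≠ (w:ℕ) := fun z w h hh => h (Fin.ext hh)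
  obtain ⟨P, hPL, hPne, hPhigh⟩ := exists_msb (hlt x) (hlt x') (hne' _ _ hxx')
  obtain ⟨R, hRL, hRne, hRhigh⟩ := exists_msb (hlt y) (hlt y') (hne' _ _ hyy')
  by_cases hPR : P = R
  · subst hPR
    by_cases hb : (x:ℕ).testBit P = (y:ℕ).testBit P
    · -- CASE B : same position, same bit
      obtain ⟨q, hqL, hqP⟩ : ∃ q, q < L ∧ q ≠ P := by
        by_cases h0 : P = 0
        · exact ⟨1, by omega, by omega⟩
        · exact ⟨0, by omega, Ne.symm h0⟩
      obtain ⟨i, hiP, -⟩ := hind P q hPL hqL (Ne.symm hqP) ((x:ℕ).testBit P) true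
      have u1 : (x:ℕ)^^^(M i) < (x':ℕ)^^^(M i) := xor_lt_xor hPne hPhigh hiP
      have u2 : (y:ℕ)^^^(M i) < (y':ℕ)^^^(M i) := xor_lt_xor hRne hRhigh (by rw [hiP, hb])
      rcases lt_or_gt_of_ne (hVne i x y hxy) with h | h
      · exact ⟨i, Or.inl (concl_first (M i) x x' y y' e f (hkeyE (M i)) (hkeyF (M i))
          (h1B i x') u1 h (lt_trans h u2))⟩
      · obtain ⟨g1, g2, g3, g4⟩ := concl_first (M i) y y' x x' f e (hkeyF (M i)) (hkeyE (M i))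
          (h1B i y') u2 h (lt_trans h u1)
        exact ⟨i, Or.inr ⟨g1, g3, g2, g4⟩⟩
    · -- bits differ at P
      obtain ⟨Q, hQL, hQne, hQhigh⟩ := exists_msb (hlt x) (hlt y) (hne' _ _ hxy)
      have hPQ : P ≤ Q := by
        by_contra hq; push_neg at hq; exact hb (hQhigh P hq)
      rcases eq_or_lt_of_le hPQ with hQP | hQP
      · -- CASE C2 : Q = P
        by_cases hxy' : x = y'
        · -- C2a : y strictly first
          have hx'y : x' ≠ y := fun h => hef (kidx_eq e f x x' y y' he hf' hxy' h)
          obtain ⟨S, hSL, hSne, hShigh⟩ :=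
            exists_msb (hlt y) (hlt x') (hne' _ _ (Ne.symm hx'y))
          have hSP : S ≠ P := by
            intro h; subst h
            exact hSne (bool3 _ _ _ (Ne.symm hb) (Ne.symm hPne))
          obtain ⟨i, hiP, hiS⟩ :=
            hind P S hPL hSL (Ne.symm hSP) ((y:ℕ).testBit P) ((y:ℕ).testBit S)
          have u1 : (y:ℕ)^^^(M i) < (y':ℕ)^^^(M i) := xor_lt_xor hRne hRhigh hiP
          have u2 : (y:ℕ)^^^(M i) < (x:ℕ)^^^(M i) :=
            xor_lt_xor (Ne.symm hb) (fun j hj => (hQhigh j (by omega)).symm) hiP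
          have u3 : (y:ℕ)^^^(M i) < (x':ℕ)^^^(M i) := xor_lt_xor hSne hShigh hiS
          obtain ⟨g1, g2, g3, g4⟩ := concl_first (M i) y y' x x' f e (hkeyF (M i)) (hkeyE (M i))
            (h1B i y') u1 u2 u3
          exact ⟨i, Or.inr ⟨g1, g3, g2, g4⟩⟩
        · -- C2b : x strictly first
          obtain ⟨S, hSL, hSne, hShigh⟩ := exists_msb (hlt x) (hlt y') (hne' _ _ hxy')
          have hSP : S ≠ P := by
            intro h; subst h
            exact hSne (bool3 _ _ _ (Ne.symm hRne) hb).symm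
          obtain ⟨i, hiP, hiS⟩ :=
            hind P S hPL hSL (Ne.symm hSP) ((x:ℕ).testBit P) ((x:ℕ).testBit S)
          have u1 : (x:ℕ)^^^(M i) < (x':ℕ)^^^(M i) := xor_lt_xor hPne hPhigh hiP
          have u2 : (x:ℕ)^^^(M i) < (y:ℕ)^^^(M i) :=
            xor_lt_xor hb (fun j hj => hQhigh j (by omega)) hiP
          have u3 : (x:ℕ)^^^(M i) < (y':ℕ)^^^(M i) := xor_lt_xor hSne hShigh hiS
          exact ⟨i, Or.inl (concl_first (M i) x x' y y' e f (hkeyE (M i)) (hkeyF (M i))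
            (h1B i x') u1 u2 u3)⟩
      · -- CASE C1 : P < Q : block separation
        obtain ⟨i, hi0, -⟩ := hind 0 1 (by omega) (by omega) (by omega) false false
        have hxQ : (x':ℕ).testBit Q = (x:ℕ).testBit Q := (hPhigh Q hQP).symm
        have hyQ : (y':ℕ).testBit Q = (y:ℕ).testBit Q := (hRhigh Q hQP).symm
        have hagree : ∀ (u w : ℕ), (∀ j, P < j → (x:ℕ).testBit j = u.testBit j) →
            (∀ j, P < j → (y:ℕ).testBit j = w.testBit j) →
            ∀ j, Q < j → u.testBit j = w.testBit j := by
          intro u w hu hw j hj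
          rw [← hu j (by omega), ← hw j (by omega)]
          exact hQhigh j hj
        have agxx : ∀ j, P < j → (x:ℕ).testBit j = (x:ℕ).testBit j := fun _ _ => rfl
        have agyy : ∀ j, P < j → (y:ℕ).testBit j = (y:ℕ).testBit j := fun _ _ => rfl
        by_cases hc : (M i).testBit Q = (x:ℕ).testBit Q
        · have u1 : (x:ℕ)^^^(M i) < (y:ℕ)^^^(M i) :=
            xor_lt_xor hQne (hagree _ _ agxx agyy) hc
          have u2 : (x:ℕ)^^^(M i) < (y':ℕ)^^^(M i) :=
            xor_lt_xor (by rw [hyQ]; exact hQne) (hagree _ _ agxx hRhigh) hc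
          have u3 : (x':ℕ)^^^(M i) < (y:ℕ)^^^(M i) :=
            xor_lt_xor (by rw [hxQ]; exact hQne) (hagree _ _ hPhigh agyy) (by rw [hc, hxQ])
          have u4 : (x':ℕ)^^^(M i) < (y':ℕ)^^^(M i) :=
            xor_lt_xor (by rw [hxQ, hyQ]; exact hQne) (hagree _ _ hPhigh hRhigh)
              (by rw [hc, hxQ])
          exact ⟨i, Or.inl (concl_block (M i) x x' y y' e f (hkeyE (M i)) (hkeyF (M i))
            (hmaxB i x x') (hVne i x x' hxx') u1 u2 u3 u4)⟩
        · have hc' : (M i).testBit Q = (y:ℕ).testBit Q := bool3 _ _ _ hc (Ne.symm hQne)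
          have u1 : (y:ℕ)^^^(M i) < (x:ℕ)^^^(M i) :=
            xor_lt_xor (Ne.symm hQne) (fun j hj => (hagree _ _ agxx agyy j hj).symm) hc'
          have u2 : (y:ℕ)^^^(M i) < (x':ℕ)^^^(M i) :=
            xor_lt_xor (by rw [hxQ]; exact Ne.symm hQne)
              (fun j hj => (hagree _ _ hPhigh agyy j hj).symm) hc'
          have u3 : (y':ℕ)^^^(M i) < (x:ℕ)^^^(M i) :=
            xor_lt_xor (by rw [hyQ]; exact Ne.symm hQne)
              (fun j hj => (hagree _ _ agxx hRhigh j hj).symm) (by rw [hc', hyQ])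
          have u4 : (y':ℕ)^^^(M i) < (x':ℕ)^^^(M i) :=
            xor_lt_xor (by rw [hxQ, hyQ]; exact Ne.symm hQne)
              (fun j hj => (hagree _ _ hPhigh hRhigh j hj).symm) (by rw [hc', hyQ])
          obtain ⟨g1, g2, g3, g4⟩ := concl_block (M i) y y' x x' f e (hkeyF (M i))
            (hkeyE (M i)) (hmaxB i y y') (hVne i y y' hyy') u1 u2 u3 u4
          exact ⟨i, Or.inr ⟨g1, g3, g2, g4⟩⟩
  · -- CASE A : P ≠ R
    obtain ⟨i, hiP, hiR⟩ := hind P R hPL hRL hPR ((x:ℕ).testBit P) ((y:ℕ).testBit R)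
    have u1 : (x:ℕ)^^^(M i) < (x':ℕ)^^^(M i) := xor_lt_xor hPne hPhigh hiP
    have u2 : (y:ℕ)^^^(M i) < (y':ℕ)^^^(M i) := xor_lt_xor hRne hRhigh hiR
    rcases lt_or_gt_of_ne (hVne i x y hxy) with h | h
    · exact ⟨i, Or.inl (concl_first (M i) x x' y y' e f (hkeyE (M i)) (hkeyF (M i))
        (h1B i x') u1 h (lt_trans h u2))⟩
    · obtain ⟨g1, g2, g3, g4⟩ := concl_first (M i) y y' x x' f e (hkeyF (M i)) (hkeyE (M i))
        (h1B i y') u2 h (lt_trans h u1)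
      exact ⟨i, Or.inr ⟨g1, g3, g2, g4⟩⟩

end Stmt9Aux


namespace Stmt9Aux

lemma sepDim_le (n L t : ℕ) (hn : n ≤ 2^L) (hL2 : 2 ≤ L)
    (hLc : L ≤ Nat.centralBinom t)
    (hex : ∃ M : Fin (2*t+2) → ℕ, (∀ i, M i < 2^L) ∧
      ∀ p q, p < L → q < L → p ≠ q → ∀ b₁ b₂ : Bool,
        ∃ i, (M i).testBit p = b₁ ∧ (M i).testBit q = b₂) :
    sepDim (Ksub n) ≤ 2*t+2 := by
  obtain ⟨M, hMlt, hind⟩ := hex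
  apply Nat.sInf_le
  refine ⟨fun i => keyF L (M i), fun i => keyF_injective hn (hMlt i), ?_⟩
  intro a b c d hab hcd h1 h2 h3 h4
  obtain ⟨x, e, hxe, hc1⟩ := ksub_adj hab
  obtain ⟨y, f, hyf, hc2⟩ := ksub_adj hcd
  rcases hc1 with ⟨ha, hb⟩ | ⟨ha, hb⟩ <;> rcases hc2 with ⟨hc, hd⟩ | ⟨hc, hd⟩ <;>
    subst ha <;> subst hb <;> subst hc <;> subst hd
  · have hxy : x ≠ y := fun h => h1 (by rw [h])
    have hef : e ≠ f := fun h => h4 (by rw [h])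
    exact keyF_sep hn hL2 M hMlt hind x y e f hxe hyf hxy hef
  · have hxy : x ≠ y := fun h => h2 (by rw [h])
    have hef : e ≠ f := fun h => h3 (by rw [h])
    obtain ⟨i, hh⟩ := keyF_sep hn hL2 M hMlt hind x y e f hxe hyf hxy hef
    refine ⟨i, ?_⟩
    rcases hh with ⟨g1, g2, g3, g4⟩ | ⟨g1, g2, g3, g4⟩
    · exact Or.inl ⟨g2, g1, g4, g3⟩
    · exact Or.inr ⟨g2, g1, g4, g3⟩
  · have hxy : x ≠ y := fun h => h3 (by rw [h])
    have hef : e ≠ f := fun h => h2 (by rw [h])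
    obtain ⟨i, hh⟩ := keyF_sep hn hL2 M hMlt hind x y e f hxe hyf hxy hef
    refine ⟨i, ?_⟩
    rcases hh with ⟨g1, g2, g3, g4⟩ | ⟨g1, g2, g3, g4⟩
    · exact Or.inl ⟨g3, g4, g1, g2⟩
    · exact Or.inr ⟨g3, g4, g1, g2⟩
  · have hxy : x ≠ y := fun h => h4 (by rw [h])
    have hef : e ≠ f := fun h => h1 (by rw [h])
    obtain ⟨i, hh⟩ := keyF_sep hn hL2 M hMlt hind x y e f hxe hyf hxy hef
    refine ⟨i, ?_⟩
    rcases hh with ⟨g1, g2, g3, g4⟩ | ⟨g1, g2, g3, g4⟩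
    · exact Or.inl ⟨g4, g3, g2, g1⟩
    · exact Or.inr ⟨g4, g3, g2, g1⟩

lemma log_le_two_sqrt (l : ℕ) : Nat.log 2 l ≤ 2 * Nat.sqrt l + 1 := by
  rcases Nat.eq_zero_or_pos l with h | h
  · simp [h]
  have h1 : l < (Nat.sqrt l + 1)^2 := Nat.lt_succ_sqrt' l
  have h2 : Nat.sqrt l + 1 ≤ 2^(Nat.sqrt l + 1) := (Nat.lt_two_pow_self).le
  have h3 : (Nat.sqrt l + 1)^2 ≤ (2^(Nat.sqrt l + 1))^2 := Nat.pow_le_pow_left h2 2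
  have h4 : (2^(Nat.sqrt l + 1))^2 = 2^(2 * Nat.sqrt l + 2) := by
    rw [← pow_mul]; ring_nf
  have h5 : l < 2^(2 * Nat.sqrt l + 2) := by omega
  have := Nat.log_lt_of_lt_pow (by omega : l ≠ 0) h5
  omega

lemma central_ge (l L t : ℕ) (hl : 3 ≤ l) (hLl : L < 2^(l+1))
    (ht : t = l/2 + Nat.log 2 l + 2) : L ≤ Nat.centralBinom t := by
  have htpos : 0 < t := by omega
  have hfour : 4^t ≤ 2 * t * Nat.centralBinom t :=
    Nat.four_pow_le_two_mul_self_mul_centralBinom t htpos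
  have hlog_le : Nat.log 2 l ≤ l := Nat.log_le_self 2 l
  have h2t : 2*t ≤ 3*l + 4 := by omega
  set C := 2^(Nat.log 2 l) with hC
  have hCl : l < 2*C := by
    have := Nat.lt_pow_succ_log_self (by norm_num : 1 < 2) l
    rw [pow_succ] at this; omega
  have hE : l + 2*Nat.log 2 l + 3 ≤ 2*t := by omega
  have hEeq : 2^(l + 2*Nat.log 2 l + 3) = 2^l * C^2 * 8 := by
    rw [pow_add, pow_add, hC, ← pow_mul, Nat.mul_comm (Nat.log 2 l) 2, pow_mul]
    norm_num
  have hL2l : L ≤ 2 * 2^l := by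
    have : (2:ℕ)^(l+1) = 2 * 2^l := by rw [pow_succ]; ring
    omega
  -- L * (2*t) ≤ 4^t
  have hmain : L * (2*t) ≤ 2^(l + 2*Nat.log 2 l + 3) := by
    rw [hEeq]
    have hc2 : 2*(3*l+4) ≤ 8*(C^2) := by
      have h1 : l + 1 ≤ 2*C := hCl
      have h2 : (l+1)*(l+1) ≤ (2*C)*(2*C) := Nat.mul_le_mul h1 h1
      have h4 : 3*l ≤ l*l := Nat.mul_le_mul_right l hl
      nlinarith [h2, h4, hl]
    calc L * (2*t) ≤ (2 * 2^l) * (3*l+4) := Nat.mul_le_mul hL2l h2t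
    _ = 2^l * (2*(3*l+4)) := by ring
    _ ≤ 2^l * (8*(C^2)) := Nat.mul_le_mul_left _ hc2
    _ = 2^l * C^2 * 8 := by ring
  have h4t : (4:ℕ)^t = 2^(2*t) := by
    rw [show (4:ℕ) = 2^2 from rfl, ← pow_mul]
  have hpow : 2^(l + 2*Nat.log 2 l + 3) ≤ 2^(2*t) :=
    Nat.pow_le_pow_right (by norm_num) hE
  have : L * (2*t) ≤ 2*t * Nat.centralBinom t := by
    calc L * (2*t) ≤ 2^(2*t) := le_trans hmain hpow
    _ = 4^t := h4t.symm
    _ ≤ 2*t * Nat.centralBinom t := hfour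
  have h2tpos : 0 < 2*t := by omega
  rw [Nat.mul_comm L (2*t)] at this
  exact Nat.le_of_mul_le_mul_left this h2tpos

end Stmt9Aux

set_option maxHeartbeats 2000000 in
/-- For every `ε > 0` there is `N` such that for all `n ≥ N`,
`π(K_n^{1/2}) ≤ (1 + ε) · log log (n − 1)` (logarithms to base 2). -/
theorem stmt9 (ε : ℝ) (hε : 0 < ε) :
    ∃ N : ℕ, ∀ n : ℕ, N ≤ n →
      (sepDim (Ksub n) : ℝ) ≤ (1 + ε) * Real.logb 2 (Real.logb 2 ((n : ℝ) - 1)) := by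
  obtain ⟨s₀, hs₀⟩ : ∃ s₀ : ℕ, 13 ≤ ε * s₀ := by
    obtain ⟨s₀, hs⟩ := exists_nat_gt (13 / ε)
    refine ⟨s₀, ?_⟩
    rw [div_lt_iff₀ hε] at hs
    nlinarith
  set l₀ := (s₀+2)*(s₀+2) + 16 with hl₀
  refine ⟨2^(2^l₀) + 2, fun n hn => ?_⟩
  set L := Nat.log 2 (n-1) + 1 with hLdef
  set l := Nat.log 2 L with hldef
  set t := l/2 + Nat.log 2 l + 2 with htdef
  have hn2 : 2^(2^l₀) + 2 ≤ n := hn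
  have hn1 : 2^(2^l₀) ≤ n - 1 := by omega
  have hlogn : 2^l₀ ≤ Nat.log 2 (n-1) := by
    rw [Nat.le_log_iff_pow_le (by norm_num) (by
      have : 0 < 2^(2^l₀) := Nat.pow_pos (by norm_num)
      omega)]
    exact hn1
  have hLlb : 2^l₀ < L := by omega
  have hll₀ : l₀ ≤ l := by
    rw [hldef, Nat.le_log_iff_pow_le (by norm_num) (by omega)]
    omega
  have hl16 : 16 ≤ l := le_trans (by omega) hll₀
  have hL2 : 2 ≤ L := by
    have h1 : (1:ℕ) ≤ 2^l₀ := Nat.one_le_two_pow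
    omega
  have hnL : n ≤ 2^L := by
    have h := Nat.lt_pow_succ_log_self (by norm_num : 1 < 2) (n-1)
    rw [Nat.succ_eq_add_one, ← hLdef] at h
    omega
  have hLl : L < 2^(l+1) := Nat.lt_pow_succ_log_self (by norm_num) L
  have hcb : L ≤ Nat.centralBinom t := Stmt9Aux.central_ge l L t (by omega) hLl htdef
  have hsep : sepDim (Ksub n) ≤ 2*t+2 :=
    Stmt9Aux.sepDim_le n L t hnL hL2 hcb (Stmt9Aux.exists_twoIndep t L hcb)
  -- now the real-number bound
  have hsqrt : Nat.sqrt l₀ ≥ s₀ + 2 := by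
    rw [ge_iff_le, Nat.le_sqrt]
    omega
  have hs : s₀ + 2 ≤ Nat.sqrt l := le_trans hsqrt (Nat.sqrt_le_sqrt hll₀)
  set s := Nat.sqrt l with hsdef
  have hklog : Nat.log 2 l ≤ 2*s + 1 := Stmt9Aux.log_le_two_sqrt l
  have hknat : 2*t + 2 ≤ l + 4*s + 8 := by omega
  have hs2l : s * s ≤ l := by simpa [pow_two] using Nat.sqrt_le' l
  have hpowlL : (2:ℕ)^l ≤ L := Nat.pow_log_le_self 2 (by omega)
  have hn3 : 1 ≤ n := le_trans (Nat.le_add_left 1 _) hn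
  clear_value l₀ L l t s
  -- real arithmetic : l + 4s + 8 ≤ (1+ε)(l-1)
  have hreal : ((2*t+2 : ℕ) : ℝ) ≤ (1+ε) * ((l:ℝ) - 1) := by
    have c1 : ((2*t+2 : ℕ) : ℝ) ≤ (l:ℝ) + 4*(s:ℝ) + 8 := by
      have h := (Nat.cast_le (α := ℝ)).mpr hknat
      push_cast at h ⊢
      linarith
    have hS2 : (s:ℝ) * (s:ℝ) ≤ (l:ℝ) := by exact_mod_cast hs2l
    have hSs₀ : (s₀:ℝ) + 2 ≤ (s:ℝ) := by exact_mod_cast hs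
    have hs₀0 : (0:ℝ) ≤ (s₀:ℝ) := Nat.cast_nonneg _
    have key : 4*(s:ℝ) + 9 ≤ ε * ((l:ℝ) - 1) := by
      have h1 : ε * (((s:ℝ)-1) * ((s:ℝ)+1)) ≤ ε * ((l:ℝ)-1) := by
        apply mul_le_mul_of_nonneg_left _ hε.le
        nlinarith
      have h2 : 13 * ((s:ℝ)+1) ≤ ε * ((s₀:ℝ) * ((s:ℝ)+1)) := by
        rw [← mul_assoc]
        apply mul_le_mul_of_nonneg_right hs₀ (by nlinarith)
      have h3 : ε * ((s₀:ℝ) * ((s:ℝ)+1)) ≤ ε * (((s:ℝ)-1) * ((s:ℝ)+1)) := by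
        apply mul_le_mul_of_nonneg_left _ hε.le
        nlinarith
      nlinarith
    linarith
  -- (l : ℝ) - 1 ≤ logb 2 (logb 2 (n-1))
  have hlogchain : ((l:ℝ) - 1) ≤ Real.logb 2 (Real.logb 2 ((n:ℝ) - 1)) := by
    have hcast : ((n-1 : ℕ) : ℝ) = (n:ℝ) - 1 := by
      have : 1 ≤ n := hn3
      push_cast [this]
      ring
    have c1 : ((L:ℝ) - 1) ≤ Real.logb 2 ((n:ℝ) - 1) := by
      have := Real.natLog_le_logb (n-1) 2
      rw [hcast] at this
      have hLcast : ((L:ℕ):ℝ) - 1 = (Nat.log 2 (n-1) : ℝ) := by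
        rw [hLdef]; push_cast; ring
      rw [hLcast]
      exact this
    have hpowL : (2:ℕ)^(l-1) ≤ L - 1 := by
      have hp : (2:ℕ)^l ≤ L := hpowlL
      have : (2:ℕ)^l = 2 * 2^(l-1) := by
        rw [← pow_succ']
        congr 1
        omega
      have h1 : (1:ℕ) ≤ 2^(l-1) := Nat.one_le_two_pow
      omega
    have c2 : ((2:ℝ))^((l-1 : ℕ)) ≤ Real.logb 2 ((n:ℝ) - 1) := by
      have : ((2^(l-1) : ℕ) : ℝ) ≤ ((L:ℝ) - 1) := by
        have : ((2^(l-1):ℕ):ℝ) ≤ ((L-1:ℕ):ℝ) := by exact_mod_cast hpowL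
        have hL1 : 1 ≤ L := by omega
        rw [Nat.cast_sub hL1] at this
        simpa using this
      calc ((2:ℝ))^((l-1:ℕ)) = ((2^(l-1):ℕ):ℝ) := by push_cast; ring
      _ ≤ (L:ℝ) - 1 := this
      _ ≤ Real.logb 2 ((n:ℝ)-1) := c1
    have c3 : Real.logb 2 ((2:ℝ)^((l-1:ℕ))) ≤ Real.logb 2 (Real.logb 2 ((n:ℝ)-1)) :=
      Real.logb_le_logb_of_le (by norm_num) (by positivity) c2
    have c4 : Real.logb 2 ((2:ℝ)^((l-1:ℕ))) = ((l-1:ℕ):ℝ) := by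
      rw [Real.logb_pow]; simp [Real.logb_self_eq_one]
    rw [c4] at c3
    have : ((l-1:ℕ):ℝ) = (l:ℝ) - 1 := by
      have : 1 ≤ l := by omega
      push_cast [this]
      ring
    linarith [c3, this.ge.trans_eq rfl]
  calc (sepDim (Ksub n) : ℝ) ≤ ((2*t+2 : ℕ) : ℝ) := by exact_mod_cast hsep
  _ ≤ (1+ε) * ((l:ℝ) - 1) := hreal
  _ ≤ (1+ε) * Real.logb 2 (Real.logb 2 ((n:ℝ) - 1)) :=
      mul_le_mul_of_nonneg_left hlogchain (by linarith)
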